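/- For every p ∈ [2,∞) there exists a constant K(p) ∈ (0,∞), depending only on p, such that for every n ≥ 1 and all independent (not necessarily identically distributed) real random variables η₁, …, η_n with E η_i = 0 and E|η_i|^p < ∞ for each i, one has (E|∑_{i=1}^n η_i|^p)^{1/p} ≤ K(p) · ( ∑_{i=1}^n (E|η_i|^p)^{2/p} )^{1/2}. -/

import Mathlib

open MeasureTheory ProbabilityTheory ENNReal Finset

private lemma sq_rpow_half_eq {x : ℝ} (q : ℝ) : (x ^ 2) ^ (q / 2) = |x| ^ q := by
  rw [← sq_abs x, ← Real.rpow_natCast |x| 2, ← Real.rpow_mul (abs_nonneg x)]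
  congr 1; ring

private lemma hasDerivAt_psi {p : ℝ} (hp : 2 ≤ p) (x : ℝ) :
    HasDerivAt (fun y : ℝ => |y| ^ (p - 2) * y) ((p - 1) * |x| ^ (p - 2)) x := by
  rcases eq_or_lt_of_le hp with hp2 | hp2
  · subst hp2
    simp only [sub_self, Real.rpow_zero, one_mul]
    have h1 : ((2:ℝ) - 1) = 1 := by norm_num
    rw [h1]
    simpa using hasDerivAt_id' x
  rcases eq_or_ne x 0 with rfl | hx
  · have hder0 : ((p : ℝ) - 1) * |(0 : ℝ)| ^ (p - 2) = 0 := by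
      rw [abs_zero, Real.zero_rpow (by linarith)]; ring
    rw [hder0]
    rw [hasDerivAt_iff_tendsto_slope]
    have hev : (fun y : ℝ => |y| ^ (p - 2)) =ᶠ[nhdsWithin 0 {(0:ℝ)}ᶜ] slope (fun y : ℝ => |y| ^ (p - 2) * y) 0 := by
      filter_upwards [self_mem_nhdsWithin] with y hy
      have hy0 : y ≠ 0 := hy
      simp [slope_def_field, hy0]
    refine Filter.Tendsto.congr' hev ?_
    have hcont : ContinuousAt (fun y : ℝ => |y| ^ (p - 2)) 0 :=
      (Real.continuousAt_rpow_const _ _ (Or.inr (by linarith))).comp continuous_abs.continuousAt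
    have h0 : |(0:ℝ)| ^ (p - 2) = 0 := by rw [abs_zero, Real.zero_rpow (by linarith)]
    have := hcont.tendsto
    rw [h0] at this
    exact this.mono_left nhdsWithin_le_nhds
  · have hx2 : x ^ 2 ≠ 0 := pow_ne_zero 2 hx
    have h1 : HasDerivAt (fun y : ℝ => y ^ 2) (2 * x) x := by
      simpa using hasDerivAt_pow 2 x
    have h3 := (h1.rpow_const (p := (p - 2) / 2) (Or.inl hx2)).mul (hasDerivAt_id x)
    have hfun : ((fun y : ℝ => (y ^ 2) ^ ((p - 2) / 2)) * id)
        = fun y : ℝ => |y| ^ (p - 2) * y := by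
      funext y
      simp [sq_rpow_half_eq (p - 2)]
    have habs : (0:ℝ) < |x| := abs_pos.mpr hx
    have hder : 2 * x * ((p - 2) / 2) * (x ^ 2) ^ ((p - 2) / 2 - 1) * id x
        + (x ^ 2) ^ ((p - 2) / 2) * 1 = (p - 1) * |x| ^ (p - 2) := by
      have e1 : (x ^ 2) ^ ((p - 2) / 2 - 1) = |x| ^ (p - 4) := by
        have h4 : ((p - 2) / 2 - 1 : ℝ) = (p - 4) / 2 := by ring
        rw [h4, sq_rpow_half_eq (p - 4)]
      have e2 : (x ^ 2) ^ ((p - 2) / 2) = |x| ^ (p - 2) := sq_rpow_half_eq (p - 2)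
      have e3 : |x| ^ (p - 4) * x ^ 2 = |x| ^ (p - 2) := by
        rw [← sq_abs x, ← Real.rpow_natCast |x| 2, ← Real.rpow_add habs]
        congr 1; ring
      rw [e1, e2]
      simp only [id]
      nlinarith [e3]
    rw [hfun, hder] at h3
    exact h3


private lemma key_pointwise {p : ℝ} (hp : 2 ≤ p) (a b : ℝ) :
    |a + b| ^ p ≤ |a| ^ p + p * (|a| ^ (p - 2) * a) * b
      + p * (p - 1) * (|a| + |b|) ^ (p - 2) * b ^ 2 := by
  have hp1 : (1:ℝ) < p := by linarith
  have hp2 : (0:ℝ) ≤ p - 2 := by linarith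
  set M : ℝ := |a| + |b| with hM
  have hMnn : 0 ≤ M := by positivity
  set ψ : ℝ → ℝ := fun y => |y| ^ (p - 2) * y with hψ
  -- Lipschitz bound for ψ on [-M, M]
  have hψlip : ∀ t ∈ Set.Icc (0:ℝ) 1, |ψ (a + t * b) - ψ a| ≤ (p - 1) * M ^ (p - 2) * |b| := by
    intro t ht
    have hmem : ∀ x : ℝ, |x| ≤ M → x ∈ Set.Icc (-M) M := fun x hx => abs_le.mp hx |> fun h => ⟨h.1, h.2⟩
    have ha : a ∈ Set.Icc (-M) M := hmem a (le_add_of_nonneg_right (abs_nonneg b))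
    have hatb : a + t * b ∈ Set.Icc (-M) M := by
      refine hmem _ ?_
      calc |a + t * b| ≤ |a| + |t * b| := abs_add_le _ _
        _ ≤ |a| + |b| := by
            have : |t * b| ≤ |b| := by
              rw [abs_mul]
              have h1 : |t| ≤ 1 := by rw [abs_of_nonneg ht.1]; exact ht.2
              nlinarith [abs_nonneg b]
            linarith
    have hmvt := Convex.norm_image_sub_le_of_norm_hasDerivWithin_le
      (f := ψ) (f' := fun x => (p - 1) * |x| ^ (p - 2)) (s := Set.Icc (-M) M)
      (C := (p - 1) * M ^ (p - 2))
      (fun x _ => (hasDerivAt_psi hp x).hasDerivWithinAt)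
      (fun x hx => by
        have hxM : |x| ≤ M := abs_le.mpr ⟨hx.1, hx.2⟩
        rw [Real.norm_eq_abs, abs_mul, abs_of_nonneg (by linarith : (0:ℝ) ≤ p - 1),
          abs_of_nonneg (Real.rpow_nonneg (abs_nonneg x) _)]
        exact mul_le_mul_of_nonneg_left (Real.rpow_le_rpow (abs_nonneg x) hxM hp2)
          (by linarith : (0:ℝ) ≤ p - 1))
      (convex_Icc _ _) ha hatb
    rw [Real.norm_eq_abs, Real.norm_eq_abs] at hmvt
    have : |a + t * b - a| = |t * b| := by ring_nf
    calc |ψ (a + t * b) - ψ a| ≤ (p - 1) * M ^ (p - 2) * |a + t * b - a| := hmvt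
      _ ≤ (p - 1) * M ^ (p - 2) * |b| := by
          have h0 : |a + t * b - a| = |t| * |b| := by rw [← abs_mul]; ring_nf
          rw [h0]
          have h1 : |t| ≤ 1 := by rw [abs_of_nonneg ht.1]; exact ht.2
          have hnn : 0 ≤ (p - 1) * M ^ (p - 2) :=
            mul_nonneg (by linarith) (Real.rpow_nonneg hMnn _)
          have h2 : |t| * |b| ≤ |b| := by nlinarith [abs_nonneg b]
          nlinarith [mul_le_mul_of_nonneg_left h2 hnn]
  -- the function F and its derivative
  set F : ℝ → ℝ := fun t => |a + t * b| ^ p - p * ψ a * b * t with hF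
  have hFd : ∀ t : ℝ, HasDerivAt F (p * ψ (a + t * b) * b - p * ψ a * b) t := by
    intro t
    have hin : HasDerivAt (fun t : ℝ => a + t * b) b t := by
      simpa using ((hasDerivAt_id t).mul_const b).const_add a
    have habs : HasDerivAt (fun y : ℝ => |y| ^ p) (p * |a + t * b| ^ (p - 2) * (a + t * b))
        (a + t * b) := hasDerivAt_abs_rpow _ hp1
    have hcomp := habs.comp t hin
    have hlin : HasDerivAt (fun t : ℝ => p * ψ a * b * t) (p * ψ a * b) t := by
      simpa using (hasDerivAt_id t).const_mul (p * ψ a * b)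
    have := hcomp.sub hlin
    have hd : p * ψ (a + t * b) * b - p * ψ a * b
        = p * |a + t * b| ^ (p - 2) * (a + t * b) * b - p * ψ a * b := by
      show p * (|a + t * b| ^ (p - 2) * (a + t * b)) * b - p * ψ a * b = _
      ring
    rw [hd]
    exact this
  have h0mem : (0:ℝ) ∈ Set.Icc (0:ℝ) 1 := ⟨le_refl _, zero_le_one⟩
  have h1mem : (1:ℝ) ∈ Set.Icc (0:ℝ) 1 := ⟨zero_le_one, le_refl _⟩
  have hmvt2 := Convex.norm_image_sub_le_of_norm_hasDerivWithin_le
    (f := F) (f' := fun t => p * ψ (a + t * b) * b - p * ψ a * b) (s := Set.Icc (0:ℝ) 1)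
    (C := p * (p - 1) * M ^ (p - 2) * b ^ 2)
    (fun t _ => (hFd t).hasDerivWithinAt)
    (fun t ht => by
      show ‖p * ψ (a + t * b) * b - p * ψ a * b‖ ≤ _
      have h1 := hψlip t ht
      have heq : p * ψ (a + t * b) * b - p * ψ a * b = p * b * (ψ (a + t * b) - ψ a) := by ring
      rw [Real.norm_eq_abs, heq, abs_mul, abs_mul, abs_of_nonneg (by linarith : (0:ℝ) ≤ p)]
      have hb2 : |b| * |b| = b ^ 2 := by rw [← abs_mul, abs_mul_self]; ring
      have hnn : (0:ℝ) ≤ (p-1) * M ^ (p-2) :=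
        mul_nonneg (by linarith) (Real.rpow_nonneg hMnn _)
      calc p * |b| * |ψ (a + t * b) - ψ a|
          ≤ p * |b| * ((p - 1) * M ^ (p - 2) * |b|) :=
            mul_le_mul_of_nonneg_left h1 (mul_nonneg (by linarith) (abs_nonneg b))
        _ = p * (p - 1) * M ^ (p - 2) * (|b| * |b|) := by ring
        _ = p * (p - 1) * M ^ (p - 2) * b ^ 2 := by rw [hb2])
    (convex_Icc _ _) h0mem h1mem
  rw [Real.norm_eq_abs, Real.norm_eq_abs] at hmvt2
  have hF1 : F 1 = |a + b| ^ p - p * (|a| ^ (p - 2) * a) * b := by simp [hF, hψ]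
  have hF0 : F 0 = |a| ^ p := by simp [hF]
  have := (abs_le.mp hmvt2).2
  rw [hF1, hF0] at this
  simp only [sub_zero, abs_one] at this
  nlinarith [this]


private lemma abs_rpow_sub_two_mul_sq {p : ℝ} (hp : 2 ≤ p) (b : ℝ) :
    |b| ^ (p - 2) * b ^ 2 = |b| ^ p := by
  rcases eq_or_ne b 0 with rfl | hb
  · rw [abs_zero, Real.zero_rpow (by linarith : p ≠ 0)]
    simp
  · have habs : (0:ℝ) < |b| := abs_pos.mpr hb
    rw [← sq_abs b, ← Real.rpow_natCast |b| 2, ← Real.rpow_add habs]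
    congr 1; push_cast; ring

private lemma key_pointwise2 {p : ℝ} (hp : 2 ≤ p) (a b : ℝ) :
    |a + b| ^ p ≤ |a| ^ p + (p * (|a| ^ (p - 2) * a)) * b
      + (p * (p - 1) * 2 ^ (p - 2)) * (|a| ^ (p - 2) * b ^ 2)
      + (p * (p - 1) * 2 ^ (p - 2)) * |b| ^ p := by
  have h := key_pointwise hp a b
  have hp2 : (0:ℝ) ≤ p - 2 := by linarith
  have hsplit : (|a| + |b|) ^ (p - 2) ≤ 2 ^ (p - 2) * (|a| ^ (p - 2) + |b| ^ (p - 2)) := by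
    have h1 : |a| + |b| ≤ 2 * max |a| |b| := by
      rcases max_cases |a| |b| with ⟨hm, hle⟩ | ⟨hm, hle⟩ <;> rw [hm] <;> linarith
    have h2 : (|a| + |b|) ^ (p - 2) ≤ (2 * max |a| |b|) ^ (p - 2) :=
      Real.rpow_le_rpow (by positivity) h1 hp2
    have h3 : (2 * max |a| |b|) ^ (p - 2) = 2 ^ (p - 2) * (max |a| |b|) ^ (p - 2) :=
      Real.mul_rpow (by norm_num) (le_max_of_le_left (abs_nonneg a))
    have h4 : (max |a| |b|) ^ (p - 2) ≤ |a| ^ (p - 2) + |b| ^ (p - 2) := by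
      rcases max_cases |a| |b| with ⟨hm, _⟩ | ⟨hm, _⟩ <;> rw [hm]
      · nlinarith [Real.rpow_nonneg (abs_nonneg b) (p - 2)]
      · nlinarith [Real.rpow_nonneg (abs_nonneg a) (p - 2)]
    calc (|a| + |b|) ^ (p - 2) ≤ 2 ^ (p - 2) * (max |a| |b|) ^ (p - 2) := by rw [← h3]; exact h2
      _ ≤ 2 ^ (p - 2) * (|a| ^ (p - 2) + |b| ^ (p - 2)) := by
          have : (0:ℝ) ≤ 2 ^ (p - 2) := Real.rpow_nonneg (by norm_num) _
          nlinarith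
  have hb2 : (0:ℝ) ≤ b ^ 2 := sq_nonneg b
  have hpp : (0:ℝ) ≤ p * (p - 1) := by nlinarith
  have hmain : p * (p - 1) * (|a| + |b|) ^ (p - 2) * b ^ 2
      ≤ (p * (p - 1) * 2 ^ (p - 2)) * (|a| ^ (p - 2) * b ^ 2)
        + (p * (p - 1) * 2 ^ (p - 2)) * |b| ^ p := by
    have h5 : (|a| + |b|) ^ (p - 2) * b ^ 2
        ≤ 2 ^ (p - 2) * (|a| ^ (p - 2) + |b| ^ (p - 2)) * b ^ 2 :=
      mul_le_mul_of_nonneg_right hsplit hb2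
    have h6 := abs_rpow_sub_two_mul_sq hp b
    calc p * (p - 1) * (|a| + |b|) ^ (p - 2) * b ^ 2
        ≤ p * (p - 1) * (2 ^ (p - 2) * (|a| ^ (p - 2) + |b| ^ (p - 2)) * b ^ 2) := by
          nlinarith [mul_le_mul_of_nonneg_left h5 hpp]
      _ = (p * (p - 1) * 2 ^ (p - 2)) * (|a| ^ (p - 2) * b ^ 2)
          + (p * (p - 1) * 2 ^ (p - 2)) * (|b| ^ (p - 2) * b ^ 2) := by ring
      _ = (p * (p - 1) * 2 ^ (p - 2)) * (|a| ^ (p - 2) * b ^ 2)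
          + (p * (p - 1) * 2 ^ (p - 2)) * |b| ^ p := by rw [h6]
  linarith


variable {Ω : Type} [MeasurableSpace Ω] {P : Measure Ω} [IsProbabilityMeasure P]

private lemma integrable_abs_rpow' {f : Ω → ℝ} (hf : Measurable f) {p q : ℝ} (hq : 0 ≤ q)
    (hqp : q ≤ p) (hfp : MemLp f (ENNReal.ofReal p) P) :
    Integrable (fun ω => |f ω| ^ q) P := by
  rcases eq_or_lt_of_le hq with h0 | h0
  · simp only [← h0, Real.rpow_zero]
    exact integrable_const 1
  · have hmem : MemLp f (ENNReal.ofReal q) P :=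
      hfp.mono_exponent (ENNReal.ofReal_le_ofReal hqp)
    have := hmem.integrable_norm_rpow (ne_of_gt (ENNReal.ofReal_pos.mpr h0))
      ENNReal.ofReal_ne_top
    simpa [ENNReal.toReal_ofReal hq, Real.norm_eq_abs] using this

private lemma lint_eq_ofReal_integral {f : Ω → ℝ} {q : ℝ} (hq : 0 ≤ q)
    (hint : Integrable (fun ω => |f ω| ^ q) P) :
    (∫⁻ ω, ENNReal.ofReal |f ω| ^ q ∂P) = ENNReal.ofReal (∫ ω, |f ω| ^ q ∂P) := by
  have h1 : ∀ ω, ENNReal.ofReal |f ω| ^ q = ENNReal.ofReal (|f ω| ^ q) := fun ω =>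
    ENNReal.ofReal_rpow_of_nonneg (abs_nonneg _) hq
  simp_rw [h1]
  rw [← ofReal_integral_eq_lintegral_ofReal hint
    (Filter.Eventually.of_forall fun ω => Real.rpow_nonneg (abs_nonneg _) _)]

private lemma memℒp_of_lint_lt_top {f : Ω → ℝ} (hf : Measurable f) {p : ℝ} (hp : 0 < p)
    (h : (∫⁻ ω, ENNReal.ofReal |f ω| ^ p ∂P) < ⊤) : MemLp f (ENNReal.ofReal p) P := by
  refine ⟨hf.aestronglyMeasurable, ?_⟩
  rw [eLpNorm_eq_lintegral_rpow_enorm_toReal (ne_of_gt (ENNReal.ofReal_pos.mpr hp))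
    ENNReal.ofReal_ne_top, ENNReal.toReal_ofReal hp.le]
  have h1 : ∀ ω, ‖f ω‖ₑ ^ p = ENNReal.ofReal |f ω| ^ p := fun ω => by
    rw [Real.enorm_eq_ofReal_abs]
  simp_rw [h1]
  exact ENNReal.rpow_lt_top_of_nonneg (by positivity) h.ne

private lemma moment_le {f : Ω → ℝ} (hf : Measurable f) {p q : ℝ} (hq : 0 ≤ q) (hqp : q ≤ p)
    (hp : 0 < p) (hfp : MemLp f (ENNReal.ofReal p) P) :
    ∫ ω, |f ω| ^ q ∂P ≤ (∫ ω, |f ω| ^ p ∂P) ^ (q / p) := by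
  rcases eq_or_lt_of_le hq with h0 | h0
  · simp only [← h0, Real.rpow_zero, zero_div]
    simp
  · -- via eLpNorm monotonicity
    have hql : (0:ℝ≥0∞) < ENNReal.ofReal q := ENNReal.ofReal_pos.mpr h0
    have hle : eLpNorm f (ENNReal.ofReal q) P ≤ eLpNorm f (ENNReal.ofReal p) P :=
      eLpNorm_le_eLpNorm_of_exponent_le (ENNReal.ofReal_le_ofReal hqp) hf.aestronglyMeasurable
    rw [eLpNorm_eq_lintegral_rpow_enorm_toReal hql.ne' ENNReal.ofReal_ne_top,
      eLpNorm_eq_lintegral_rpow_enorm_toReal (ne_of_gt (ENNReal.ofReal_pos.mpr hp))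
        ENNReal.ofReal_ne_top, ENNReal.toReal_ofReal hq, ENNReal.toReal_ofReal hp.le] at hle
    have habs : ∀ (r : ℝ), (fun ω => ‖f ω‖ₑ ^ r) = fun ω => ENNReal.ofReal |f ω| ^ r := by
      intro r; funext ω; rw [Real.enorm_eq_ofReal_abs]
    rw [habs q, habs p] at hle
    have hIq := integrable_abs_rpow' hf hq hqp hfp
    have hIp := integrable_abs_rpow' hf hp.le (le_refl p) hfp
    rw [lint_eq_ofReal_integral hq hIq, lint_eq_ofReal_integral hp.le hIp] at hle
    -- raise to power q
    have hq' : (0:ℝ) ≤ q := hq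
    have h2 := ENNReal.rpow_le_rpow hle hq'
    rw [← ENNReal.rpow_mul, ← ENNReal.rpow_mul, one_div_mul_cancel h0.ne',
      ENNReal.rpow_one] at h2
    have h3 : (1 / p * q : ℝ) = q / p := by field_simp
    rw [h3] at h2
    have hnnq : 0 ≤ ∫ ω, |f ω| ^ q ∂P := integral_nonneg fun ω => Real.rpow_nonneg (abs_nonneg _) _
    have hnnp : 0 ≤ ∫ ω, |f ω| ^ p ∂P := integral_nonneg fun ω => Real.rpow_nonneg (abs_nonneg _) _
    rw [ENNReal.ofReal_rpow_of_nonneg hnnp (by positivity)] at h2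
    exact (ENNReal.ofReal_le_ofReal_iff (Real.rpow_nonneg hnnp _)).mp h2
private lemma step_lemma {Ω : Type} [MeasurableSpace Ω] {P : Measure Ω} [IsProbabilityMeasure P]
    {p : ℝ} (hp : 2 ≤ p) {S X : Ω → ℝ} (hS : Measurable S) (hX : Measurable X)
    (hind : IndepFun S X P) (hSp : MemLp S (ENNReal.ofReal p) P)
    (hXp : MemLp X (ENNReal.ofReal p) P) (hX0 : ∫ ω, X ω ∂P = 0) :
    ∫ ω, |S ω + X ω| ^ p ∂P ≤ ∫ ω, |S ω| ^ p ∂P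
      + (p * (p - 1) * 2 ^ (p - 2)) *
        ((∫ ω, |S ω| ^ p ∂P) ^ ((p - 2) / p) * (∫ ω, |X ω| ^ p ∂P) ^ (2 / p)
          + ∫ ω, |X ω| ^ p ∂P) := by
  have hp0 : (0:ℝ) < p := by linarith
  have hp2 : (0:ℝ) ≤ p - 2 := by linarith
  set C : ℝ := p * (p - 1) * 2 ^ (p - 2) with hC
  have hCnn : 0 ≤ C := by
    rw [hC]
    exact mul_nonneg (mul_nonneg (by linarith) (by linarith))
      (Real.rpow_nonneg (by norm_num) _)
  -- measurability of auxiliary functions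
  have hmes1 : Measurable fun x : ℝ => |x| ^ (p - 2) :=
    ((Real.continuous_rpow_const hp2).comp continuous_abs).measurable
  have hmespsi : Measurable fun x : ℝ => |x| ^ (p - 2) * x :=
    hmes1.mul measurable_id
  have hmessq : Measurable fun x : ℝ => x ^ 2 := measurable_id.pow_const 2
  -- integrability facts
  have hIS : Integrable (fun ω => |S ω| ^ p) P := integrable_abs_rpow' hS hp0.le le_rfl hSp
  have hIX : Integrable (fun ω => |X ω| ^ p) P := integrable_abs_rpow' hX hp0.le le_rfl hXp
  have hISp2 : Integrable (fun ω => |S ω| ^ (p - 2)) P :=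
    integrable_abs_rpow' hS hp2 (by linarith) hSp
  have hIX2 : Integrable (fun ω => X ω ^ 2) P := by
    have h := integrable_abs_rpow' hX (by norm_num : (0:ℝ) ≤ 2) (by linarith) hXp
    have heq : (fun ω => |X ω| ^ (2:ℝ)) = fun ω => X ω ^ 2 := by
      funext ω
      rw [show ((2:ℝ)) = ((2:ℕ):ℝ) by norm_num, Real.rpow_natCast, sq_abs]
    rwa [heq] at h
  have hIntX : Integrable X P := hXp.integrable (by
    rw [ENNReal.one_le_ofReal]; linarith)
  have habspsi : ∀ x : ℝ, |x| ^ (p - 2) * |x| = |x| ^ (p - 1) := by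
    intro x
    rcases eq_or_ne x 0 with rfl | hx
    · rw [abs_zero, Real.zero_rpow (by linarith : p - 1 ≠ 0), mul_zero]
    · rw [show (p - 1 : ℝ) = (p - 2) + 1 by ring, Real.rpow_add_one (abs_ne_zero.mpr hx)]
  have hIpsiS : Integrable (fun ω => |S ω| ^ (p - 2) * S ω) P := by
    refine Integrable.mono' (integrable_abs_rpow' hS (by linarith : (0:ℝ) ≤ p - 1)
      (by linarith) hSp) ((hmespsi.comp hS).aestronglyMeasurable) ?_
    refine Filter.Eventually.of_forall fun ω => ?_
    rw [Real.norm_eq_abs, abs_mul, abs_of_nonneg (Real.rpow_nonneg (abs_nonneg _) _),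
      habspsi (S ω)]
  -- independence of compositions
  have hind1 : IndepFun (fun ω => |S ω| ^ (p - 2) * S ω) X P :=
    hind.comp hmespsi measurable_id
  have hind2 : IndepFun (fun ω => |S ω| ^ (p - 2)) (fun ω => X ω ^ 2) P :=
    hind.comp hmes1 hmessq
  -- integrability of products
  have hIprod1 : Integrable (fun ω => (|S ω| ^ (p - 2) * S ω) * X ω) P :=
    hind1.integrable_mul hIpsiS hIntX
  have hIprod2 : Integrable (fun ω => |S ω| ^ (p - 2) * X ω ^ 2) P :=
    hind2.integrable_mul hISp2 hIX2
  -- integrability of the sum S + X power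
  have hISX : Integrable (fun ω => |S ω + X ω| ^ p) P := by
    have hmem : MemLp (fun ω => S ω + X ω) (ENNReal.ofReal p) P := hSp.add hXp
    exact integrable_abs_rpow' (hS.add hX) hp0.le le_rfl hmem
  -- pointwise bound
  have hpt : ∀ ω, |S ω + X ω| ^ p ≤ |S ω| ^ p + (p * (|S ω| ^ (p - 2) * S ω)) * X ω
      + C * (|S ω| ^ (p - 2) * X ω ^ 2) + C * |X ω| ^ p := fun ω =>
    key_pointwise2 hp (S ω) (X ω)
  -- integral of the RHS
  have hB : Integrable (fun ω => (p * (|S ω| ^ (p - 2) * S ω)) * X ω) P := by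
    have heq : (fun ω => (p * (|S ω| ^ (p - 2) * S ω)) * X ω)
        = fun ω => p * ((|S ω| ^ (p - 2) * S ω) * X ω) := by funext ω; ring
    rw [heq]; exact hIprod1.const_mul p
  have hRHS : Integrable (fun ω => |S ω| ^ p + (p * (|S ω| ^ (p - 2) * S ω)) * X ω
      + C * (|S ω| ^ (p - 2) * X ω ^ 2) + C * |X ω| ^ p) P :=
    ((hIS.add hB).add (hIprod2.const_mul C)).add (hIX.const_mul C)
  have hle := integral_mono hISX hRHS hpt
  -- split the integral of the RHS
  have hAB : Integrable (fun ω => |S ω| ^ p + (p * (|S ω| ^ (p - 2) * S ω)) * X ω) P :=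
    hIS.add hB
  have hABC : Integrable (fun ω => |S ω| ^ p + (p * (|S ω| ^ (p - 2) * S ω)) * X ω
      + C * (|S ω| ^ (p - 2) * X ω ^ 2)) P := hAB.add (hIprod2.const_mul C)
  have hD : Integrable (fun ω => C * |X ω| ^ p) P := hIX.const_mul C
  have hC2 : Integrable (fun ω => C * (|S ω| ^ (p - 2) * X ω ^ 2)) P :=
    hIprod2.const_mul C
  rw [integral_add hABC hD, integral_add hAB hC2, integral_add hIS hB,
    integral_const_mul, integral_const_mul] at hle
  -- cross term vanishes
  have hcross : ∫ ω, (p * (|S ω| ^ (p - 2) * S ω)) * X ω ∂P = 0 := by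
    have heq : (fun ω => (p * (|S ω| ^ (p - 2) * S ω)) * X ω)
        = fun ω => p * ((|S ω| ^ (p - 2) * S ω) * X ω) := by funext ω; ring
    rw [heq, integral_const_mul]
    have hmul : ∫ ω, (|S ω| ^ (p - 2) * S ω) * X ω ∂P
        = (∫ ω, |S ω| ^ (p - 2) * S ω ∂P) * ∫ ω, X ω ∂P :=
      hind1.integral_mul_eq_mul_integral hIpsiS.aestronglyMeasurable hIntX.aestronglyMeasurable
    rw [hmul, hX0, mul_zero, mul_zero]
  -- product term splits
  have hprod : ∫ ω, |S ω| ^ (p - 2) * X ω ^ 2 ∂P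
      = (∫ ω, |S ω| ^ (p - 2) ∂P) * ∫ ω, X ω ^ 2 ∂P :=
    hind2.integral_mul_eq_mul_integral hISp2.aestronglyMeasurable hIX2.aestronglyMeasurable
  rw [hcross, hprod] at hle
  -- moment bounds
  have hm1 : ∫ ω, |S ω| ^ (p - 2) ∂P ≤ (∫ ω, |S ω| ^ p ∂P) ^ ((p - 2) / p) :=
    moment_le hS hp2 (by linarith) hp0 hSp
  have hm2 : ∫ ω, X ω ^ 2 ∂P ≤ (∫ ω, |X ω| ^ p ∂P) ^ (2 / p) := by
    have h := moment_le hX (by norm_num : (0:ℝ) ≤ 2) hp hp0 hXp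
    have heq : (fun ω => |X ω| ^ (2:ℝ)) = fun ω => X ω ^ 2 := by
      funext ω
      rw [show ((2:ℝ)) = ((2:ℕ):ℝ) by norm_num, Real.rpow_natCast, sq_abs]
    rwa [heq] at h
  have hnn1 : 0 ≤ ∫ ω, |S ω| ^ (p - 2) ∂P :=
    integral_nonneg fun ω => Real.rpow_nonneg (abs_nonneg _) _
  have hnn2 : 0 ≤ ∫ ω, X ω ^ 2 ∂P := integral_nonneg fun ω => sq_nonneg _
  have hnn3 : 0 ≤ (∫ ω, |S ω| ^ p ∂P) ^ ((p - 2) / p) :=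
    Real.rpow_nonneg (integral_nonneg fun ω => Real.rpow_nonneg (abs_nonneg _) _) _
  have hmm : (∫ ω, |S ω| ^ (p - 2) ∂P) * ∫ ω, X ω ^ 2 ∂P
      ≤ (∫ ω, |S ω| ^ p ∂P) ^ ((p - 2) / p) * (∫ ω, |X ω| ^ p ∂P) ^ (2 / p) :=
    mul_le_mul hm1 hm2 hnn2 hnn3
  nlinarith [mul_le_mul_of_nonneg_left hmm hCnn]
private lemma rpow_half_mul_self {p : ℝ} (hp : 2 ≤ p) {y : ℝ} (hy : 0 ≤ y) :
    y ^ ((p - 2) / 2) * y = y ^ (p / 2) := by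
  rcases eq_or_lt_of_le hy with h0 | h0
  · rw [← h0, Real.zero_rpow (by positivity : (p:ℝ)/2 ≠ 0), mul_zero]
  · rw [show (p / 2 : ℝ) = (p - 2) / 2 + 1 by ring, Real.rpow_add_one h0.ne']

private lemma numeric_step {p C K x B b : ℝ} (hp : 2 ≤ p) (hC : 1 ≤ C) (hK : K = 2 * C)
    (hx : 0 ≤ x) (hB : 0 ≤ B) (hb : 0 ≤ b) (hIH : x ≤ K ^ p * B ^ (p / 2)) :
    x + C * (x ^ ((p - 2) / p) * b + b ^ (p / 2)) ≤ K ^ p * (B + b) ^ (p / 2) := by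
  have hp0 : (0:ℝ) < p := by linarith
  have hp2 : (0:ℝ) ≤ p - 2 := by linarith
  have hK1 : (1:ℝ) ≤ K := by rw [hK]; linarith
  have hK0 : (0:ℝ) < K := by linarith
  have hunn : 0 ≤ B ^ ((p - 2) / 2) := Real.rpow_nonneg hB _
  have hsnn : 0 ≤ B ^ (p / 2) := Real.rpow_nonneg hB _
  have htnn : 0 ≤ b ^ (p / 2) := Real.rpow_nonneg hb _
  have hEexp : (B + b) ^ (p / 2)
      = (B + b) ^ ((p - 2) / 2) * B + (B + b) ^ ((p - 2) / 2) * b := by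
    rw [← rpow_half_mul_self hp (by linarith : (0:ℝ) ≤ B + b)]; ring
  have hBb1 : B ^ ((p - 2) / 2) ≤ (B + b) ^ ((p - 2) / 2) :=
    Real.rpow_le_rpow hB (by linarith) (by positivity)
  have hbb1 : b ^ ((p - 2) / 2) ≤ (B + b) ^ ((p - 2) / 2) :=
    Real.rpow_le_rpow hb (by linarith) (by positivity)
  have hineq1 : B ^ (p / 2) + B ^ ((p - 2) / 2) * b ≤ (B + b) ^ (p / 2) := by
    rw [hEexp, ← rpow_half_mul_self hp hB]
    have h1 := mul_le_mul_of_nonneg_right hBb1 hB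
    have h2 := mul_le_mul_of_nonneg_right hBb1 hb
    linarith
  have hineq2 : B ^ (p / 2) + b ^ (p / 2) ≤ (B + b) ^ (p / 2) := by
    rw [hEexp, ← rpow_half_mul_self hp hB, ← rpow_half_mul_self hp hb]
    have h1 := mul_le_mul_of_nonneg_right hBb1 hB
    have h2 := mul_le_mul_of_nonneg_right hbb1 hb
    linarith
  have hxb : x ^ ((p - 2) / p) ≤ K ^ (p - 2) * B ^ ((p - 2) / 2) := by
    have h1 : x ^ ((p - 2) / p) ≤ (K ^ p * B ^ (p / 2)) ^ ((p - 2) / p) :=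
      Real.rpow_le_rpow hx hIH (by positivity)
    have h2 : (K ^ p * B ^ (p / 2)) ^ ((p - 2) / p)
        = (K ^ p) ^ ((p - 2) / p) * (B ^ (p / 2)) ^ ((p - 2) / p) :=
      Real.mul_rpow (Real.rpow_nonneg hK0.le _) hsnn
    have h3 : (K ^ p) ^ ((p - 2) / p) = K ^ (p - 2) := by
      rw [← Real.rpow_mul hK0.le]
      congr 1; field_simp
    have h4 : (B ^ (p / 2)) ^ ((p - 2) / p) = B ^ ((p - 2) / 2) := by
      rw [← Real.rpow_mul hB]
      congr 1; field_simp
    rw [h2, h3, h4] at h1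
    exact h1
  have hKp2pos : (0:ℝ) < K ^ (p - 2) := Real.rpow_pos_of_pos hK0 _
  have hKpeq : K ^ p = K ^ (p - 2) * K ^ (2:ℝ) := by
    rw [← Real.rpow_add hK0]; congr 1; ring
  have hK2eq : K ^ (2:ℝ) = 4 * C ^ 2 := by
    rw [show ((2:ℝ)) = ((2:ℕ):ℝ) by norm_num, Real.rpow_natCast, hK]; ring
  have hK2ge : 2 * C ≤ K ^ (2:ℝ) := by rw [hK2eq]; nlinarith
  have hKm : (1:ℝ) ≤ K ^ (p - 2) := by
    calc (1:ℝ) = K ^ (0:ℝ) := by rw [Real.rpow_zero]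
      _ ≤ K ^ (p - 2) := Real.rpow_le_rpow_of_exponent_le hK1 hp2
  have hCK : C * K ^ (p - 2) ≤ K ^ p / 2 := by
    have h1 := mul_le_mul_of_nonneg_left hK2ge hKp2pos.le
    rw [hKpeq]; linarith
  have hCle : C ≤ K ^ p / 2 := by
    have h1 : 2 * C ≤ K ^ (p - 2) * (2 * C) := by
      have := mul_le_mul_of_nonneg_right hKm (by linarith : (0:ℝ) ≤ 2 * C)
      linarith
    have h2 := mul_le_mul_of_nonneg_left hK2ge hKp2pos.le
    rw [hKpeq]; linarith
  -- assemble
  have hA : C * (x ^ ((p - 2) / p) * b) ≤ C * ((K ^ (p - 2) * B ^ ((p - 2) / 2)) * b) :=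
    mul_le_mul_of_nonneg_left (mul_le_mul_of_nonneg_right hxb hb) (by linarith)
  have hA2 : (C * K ^ (p - 2)) * (B ^ ((p - 2) / 2) * b)
      ≤ (K ^ p / 2) * (B ^ ((p - 2) / 2) * b) :=
    mul_le_mul_of_nonneg_right hCK (mul_nonneg hunn hb)
  have hA3 : C * b ^ (p / 2) ≤ (K ^ p / 2) * b ^ (p / 2) :=
    mul_le_mul_of_nonneg_right hCle htnn
  have hE1 := mul_le_mul_of_nonneg_left hineq1 (by positivity : (0:ℝ) ≤ K ^ p / 2)
  have hE2 := mul_le_mul_of_nonneg_left hineq2 (by positivity : (0:ℝ) ≤ K ^ p / 2)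
  linarith [hE1, hE2, hA, hA2, hA3, hIH]
/-- Rosenthal-type inequality for independent (not necessarily identically
distributed) centered variables: for each `p ∈ [2,∞)` there is `K(p) ∈ (0,∞)` with
`(E|∑ ηᵢ|^p)^{1/p} ≤ K(p) (∑ (E|ηᵢ|^p)^{2/p})^{1/2}`. -/
theorem stmt_7 (p : ℝ) (hp : 2 ≤ p) :
    ∃ K : ℝ, 0 < K ∧
      ∀ (Ω : Type) [MeasurableSpace Ω] (P : Measure Ω) [IsProbabilityMeasure P]
        (n : ℕ), 1 ≤ n →
        ∀ η : Fin n → Ω → ℝ,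
        (∀ i, Measurable (η i)) →
        iIndepFun η P →
        (∀ i, ∫ ω, η i ω ∂P = 0) →
        (∀ i, (∫⁻ ω, ENNReal.ofReal |η i ω| ^ p ∂P) < ⊤) →
        (∫⁻ ω, ENNReal.ofReal |∑ i, η i ω| ^ p ∂P) ^ (1 / p)
          ≤ ENNReal.ofReal K *
              (∑ i, (∫⁻ ω, ENNReal.ofReal |η i ω| ^ p ∂P) ^ (2 / p)) ^ ((1 : ℝ) / 2) := by
  have hp0 : (0:ℝ) < p := by linarith
  have hp2 : (0:ℝ) ≤ p - 2 := by linarith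
  set C : ℝ := p * (p - 1) * 2 ^ (p - 2) with hCdef
  have h2p2 : (1:ℝ) ≤ 2 ^ (p - 2) := by
    calc (1:ℝ) = 2 ^ (0:ℝ) := by rw [Real.rpow_zero]
      _ ≤ 2 ^ (p - 2) := Real.rpow_le_rpow_of_exponent_le (by norm_num) hp2
  have hpp : (2:ℝ) ≤ p * (p - 1) := by nlinarith
  have hC1 : (1:ℝ) ≤ C := by
    rw [hCdef]
    nlinarith [mul_le_mul_of_nonneg_left h2p2 (by nlinarith : (0:ℝ) ≤ p * (p - 1))]
  refine ⟨2 * C, by linarith, ?_⟩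
  intro Ω _ P _ n hn η hmeas hindep hmean hmom
  set K : ℝ := 2 * C with hKdef
  have hK0 : (0:ℝ) < K := by rw [hKdef]; linarith
  -- each η i is in L^p
  have hMem : ∀ i, MemLp (η i) (ENNReal.ofReal p) P := fun i =>
    memℒp_of_lint_lt_top (hmeas i) hp0 (hmom i)
  have hInt : ∀ i, Integrable (fun ω => |η i ω| ^ p) P := fun i =>
    integrable_abs_rpow' (hmeas i) hp0.le le_rfl (hMem i)
  have hm_nn : ∀ i, 0 ≤ ∫ ω, |η i ω| ^ p ∂P := fun i =>
    integral_nonneg fun ω => Real.rpow_nonneg (abs_nonneg _) _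
  -- main real-valued induction
  have hmain : ∀ s : Finset (Fin n),
      ∫ ω, |∑ i ∈ s, η i ω| ^ p ∂P
        ≤ K ^ p * (∑ i ∈ s, (∫ ω, |η i ω| ^ p ∂P) ^ (2 / p)) ^ (p / 2) := by
    intro s
    induction s using Finset.induction with
    | empty =>
        have h1 : ∫ ω, |∑ i ∈ (∅ : Finset (Fin n)), η i ω| ^ p ∂P = 0 := by
          simp [Real.zero_rpow hp0.ne']
        rw [h1, Finset.sum_empty, Real.zero_rpow (by positivity : (p:ℝ)/2 ≠ 0), mul_zero]
    | insert j s' hj ih =>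
        have hmeasS : Measurable fun ω => ∑ i ∈ s', η i ω :=
          Finset.measurable_sum s' fun i _ => hmeas i
        have hSp : MemLp (fun ω => ∑ i ∈ s', η i ω) (ENNReal.ofReal p) P :=
          memLp_finsetSum s' fun i _ => hMem i
        have hindSX : IndepFun (fun ω => ∑ i ∈ s', η i ω) (η j) P := by
          have h := hindep.indepFun_finsetSum_of_notMem hmeas hj
          have heq : (∑ i ∈ s', η i) = fun ω => ∑ i ∈ s', η i ω := by
            funext ω; exact Finset.sum_apply ω s' η
          rwa [heq] at h
        have hstep := step_lemma hp hmeasS (hmeas j) hindSX hSp (hMem j) (hmean j)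
        have hrw : (fun ω => |∑ i ∈ insert j s', η i ω| ^ p)
            = fun ω => |(∑ i ∈ s', η i ω) + η j ω| ^ p := by
          funext ω; rw [Finset.sum_insert hj, add_comm]
        have hLHS : ∫ ω, |∑ i ∈ insert j s', η i ω| ^ p ∂P
            = ∫ ω, |(∑ i ∈ s', η i ω) + η j ω| ^ p ∂P := by rw [hrw]
        -- abbreviations
        have hmj : ((∫ ω, |η j ω| ^ p ∂P) ^ (2 / p)) ^ (p / 2) = ∫ ω, |η j ω| ^ p ∂P := by
          rw [← Real.rpow_mul (hm_nn j), show (2 / p) * (p / 2) = (1:ℝ) by field_simp,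
            Real.rpow_one]
        have hnum := numeric_step (x := ∫ ω, |∑ i ∈ s', η i ω| ^ p ∂P)
          (B := ∑ i ∈ s', (∫ ω, |η i ω| ^ p ∂P) ^ (2 / p))
          (b := (∫ ω, |η j ω| ^ p ∂P) ^ (2 / p))
          hp hC1 hKdef
          (integral_nonneg fun ω => Real.rpow_nonneg (abs_nonneg _) _)
          (Finset.sum_nonneg fun i _ => Real.rpow_nonneg (hm_nn i) _)
          (Real.rpow_nonneg (hm_nn j) _) ih
        rw [hmj] at hnum
        rw [hLHS, Finset.sum_insert hj]
        calc ∫ ω, |(∑ i ∈ s', η i ω) + η j ω| ^ p ∂P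
            ≤ (∫ ω, |∑ i ∈ s', η i ω| ^ p ∂P)
              + C * ((∫ ω, |∑ i ∈ s', η i ω| ^ p ∂P) ^ ((p - 2) / p)
                  * (∫ ω, |η j ω| ^ p ∂P) ^ (2 / p) + ∫ ω, |η j ω| ^ p ∂P) := hstep
          _ ≤ K ^ p * ((∑ i ∈ s', (∫ ω, |η i ω| ^ p ∂P) ^ (2 / p))
                + (∫ ω, |η j ω| ^ p ∂P) ^ (2 / p)) ^ (p / 2) := hnum
          _ = K ^ p * ((∫ ω, |η j ω| ^ p ∂P) ^ (2 / p)
                + ∑ i ∈ s', (∫ ω, |η i ω| ^ p ∂P) ^ (2 / p)) ^ (p / 2) := by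
              rw [add_comm]
  -- apply to univ
  have huniv := hmain Finset.univ
  -- convert to ENNReal statement
  have hmeasT : Measurable fun ω => ∑ i, η i ω :=
    Finset.measurable_sum Finset.univ fun i _ => hmeas i
  have hTmem : MemLp (fun ω => ∑ i, η i ω) (ENNReal.ofReal p) P :=
    memLp_finsetSum Finset.univ fun i _ => hMem i
  have hTint : Integrable (fun ω => |∑ i, η i ω| ^ p) P :=
    integrable_abs_rpow' hmeasT hp0.le le_rfl hTmem
  have hTnn : 0 ≤ ∫ ω, |∑ i, η i ω| ^ p ∂P :=
    integral_nonneg fun ω => Real.rpow_nonneg (abs_nonneg _) _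
  have hLlint : (∫⁻ ω, ENNReal.ofReal |∑ i, η i ω| ^ p ∂P)
      = ENNReal.ofReal (∫ ω, |∑ i, η i ω| ^ p ∂P) :=
    lint_eq_ofReal_integral hp0.le hTint
  have hRlint : ∀ i, (∫⁻ ω, ENNReal.ofReal |η i ω| ^ p ∂P)
      = ENNReal.ofReal (∫ ω, |η i ω| ^ p ∂P) := fun i =>
    lint_eq_ofReal_integral hp0.le (hInt i)
  rw [hLlint]
  simp_rw [hRlint]
  have hsum_nn : 0 ≤ ∑ i, (∫ ω, |η i ω| ^ p ∂P) ^ (2 / p) :=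
    Finset.sum_nonneg fun i _ => Real.rpow_nonneg (hm_nn i) _
  -- real inequality with exponents 1/p
  have hreal : (∫ ω, |∑ i, η i ω| ^ p ∂P) ^ (1 / p)
      ≤ K * (∑ i, (∫ ω, |η i ω| ^ p ∂P) ^ (2 / p)) ^ ((1:ℝ) / 2) := by
    have h1 : (∫ ω, |∑ i, η i ω| ^ p ∂P) ^ (1 / p)
        ≤ (K ^ p * (∑ i, (∫ ω, |η i ω| ^ p ∂P) ^ (2 / p)) ^ (p / 2)) ^ (1 / p) :=
      Real.rpow_le_rpow hTnn huniv (by positivity)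
    have h2 : (K ^ p * (∑ i, (∫ ω, |η i ω| ^ p ∂P) ^ (2 / p)) ^ (p / 2)) ^ (1 / p)
        = K * (∑ i, (∫ ω, |η i ω| ^ p ∂P) ^ (2 / p)) ^ ((1:ℝ) / 2) := by
      rw [Real.mul_rpow (Real.rpow_nonneg hK0.le _) (Real.rpow_nonneg hsum_nn _),
        ← Real.rpow_mul hK0.le, ← Real.rpow_mul hsum_nn,
        show p * (1 / p) = (1:ℝ) by field_simp,
        show (p / 2) * (1 / p) = (1:ℝ)/2 by field_simp,
        Real.rpow_one]
    rw [h2] at h1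
    exact h1
  -- transfer to ENNReal
  calc ENNReal.ofReal (∫ ω, |∑ i, η i ω| ^ p ∂P) ^ (1 / p)
      = ENNReal.ofReal ((∫ ω, |∑ i, η i ω| ^ p ∂P) ^ (1 / p)) :=
        ENNReal.ofReal_rpow_of_nonneg hTnn (by positivity)
    _ ≤ ENNReal.ofReal (K * (∑ i, (∫ ω, |η i ω| ^ p ∂P) ^ (2 / p)) ^ ((1:ℝ) / 2)) :=
        ENNReal.ofReal_le_ofReal hreal
    _ = ENNReal.ofReal K * ENNReal.ofReal ((∑ i, (∫ ω, |η i ω| ^ p ∂P) ^ (2 / p)) ^ ((1:ℝ) / 2)) :=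
        ENNReal.ofReal_mul hK0.le
    _ = ENNReal.ofReal K * (ENNReal.ofReal (∑ i, (∫ ω, |η i ω| ^ p ∂P) ^ (2 / p))) ^ ((1:ℝ) / 2) := by
        rw [ENNReal.ofReal_rpow_of_nonneg hsum_nn (by norm_num)]
    _ = ENNReal.ofReal K * (∑ i, ENNReal.ofReal ((∫ ω, |η i ω| ^ p ∂P) ^ (2 / p))) ^ ((1:ℝ) / 2) := by
        rw [ENNReal.ofReal_sum_of_nonneg fun i _ => Real.rpow_nonneg (hm_nn i) _]
    _ = ENNReal.ofReal K * (∑ i, ENNReal.ofReal (∫ ω, |η i ω| ^ p ∂P) ^ (2 / p)) ^ ((1:ℝ) / 2) := by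
        congr 1
        refine congrArg (· ^ ((1:ℝ)/2)) ?_
        refine Finset.sum_congr rfl fun i _ => ?_
        rw [ENNReal.ofReal_rpow_of_nonneg (hm_nn i) (by positivity)]
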